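/- For every g ∈ A₁ one has |ĝ(α)| ≤ ĝ(0) for all α ∈ ℝ and consequently ρ₁(g) ≥ 0; moreover, if g is not identically zero, then ρ₁(g) > 0. -/

import Mathlib

open MeasureTheory Filter
open scoped Classical

noncomputable section

/-- The Fourier transform `ĝ(α) = ∫ g(x) e^{-2πiαx} dx` of a real-valued function. -/
def fourierT (g : ℝ → ℝ) (α : ℝ) : ℂ :=
  ∫ x : ℝ, (g x : ℂ) * Complex.exp (-(2 * Real.pi * α * x : ℝ) * Complex.I)

/-- The class `A₁` of continuous, even, non-negative functions `g ∈ L¹(ℝ)`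
with `ĝ(α) ≤ 0` for `|α| ≥ 1` (such `ĝ` is real-valued since `g` is even and real). -/
def memA1 (g : ℝ → ℝ) : Prop :=
  Continuous g ∧ (∀ x, g (-x) = g x) ∧ (∀ x, 0 ≤ g x) ∧ MeasureTheory.Integrable g ∧
    ∀ α : ℝ, 1 ≤ |α| → (fourierT g α).re ≤ 0

/-- The functional `ρ₁(g) = ĝ(0) + ∫_{-1}^{1} ĝ(α)|α| dα`. -/
def rho1 (g : ℝ → ℝ) : ℝ :=
  (fourierT g 0).re + ∫ α in (-1 : ℝ)..1, (fourierT g α).re * |α|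

/-- The constant `C₁ = inf ρ₁(g)/g(0)` over nonzero `g ∈ A₁` with `g(0) > 0`. -/
def C1 : ℝ :=
  sInf {c : ℝ | ∃ g : ℝ → ℝ, memA1 g ∧ g ≠ 0 ∧ 0 < g 0 ∧ c = rho1 g / g 0}

lemma fourierT_eq (g : ℝ → ℝ) :
    fourierT g = FourierTransform.fourier (fun x : ℝ => (g x : ℂ)) := by
  ext α
  rw [Real.fourier_real_eq_integral_exp_smul]
  unfold fourierT
  congr 1; ext x
  rw [smul_eq_mul, mul_comm]
  congr 2
  push_cast
  ring

lemma fourierT_zero (g : ℝ → ℝ) : (fourierT g 0) = ((∫ x, g x : ℝ) : ℂ) := by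
  simp [fourierT]; exact integral_ofReal

lemma fourierT_continuous (g : ℝ → ℝ) (hInt : MeasureTheory.Integrable g) :
    Continuous (fourierT g) := by
  rw [fourierT_eq]
  exact VectorFourier.fourierIntegral_continuous Real.continuous_fourierChar
    continuous_inner (hInt.ofReal (𝕜 := ℂ))

lemma integral_abs_le_one : (∫ x in (-1 : ℝ)..1, |x|) = 1 := by
  have ci : ∀ a b : ℝ, IntervalIntegrable (fun x : ℝ => |x|) volume a b :=
    fun a b => continuous_abs.intervalIntegrable a b
  have h0 : (∫ x in (-1 : ℝ)..0, |x|) = 1 / 2 := by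
    have he : Set.EqOn (fun x : ℝ => |x|) (fun x : ℝ => -x) (Set.uIcc (-1 : ℝ) 0) := by
      intro x hx
      rcases Set.mem_uIcc.1 hx with h | h
      · exact abs_of_nonpos h.2
      · exact abs_of_nonpos (by linarith [h.1, h.2])
    rw [intervalIntegral.integral_congr he, intervalIntegral.integral_neg, integral_id]
    norm_num
  have h1 : (∫ x in (0 : ℝ)..1, |x|) = 1 / 2 := by
    have he : Set.EqOn (fun x : ℝ => |x|) (fun x : ℝ => x) (Set.uIcc (0 : ℝ) 1) := by
      intro x hx
      rcases Set.mem_uIcc.1 hx with h | h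
      · exact abs_of_nonneg h.1
      · exact abs_of_nonneg (by linarith [h.1, h.2])
    rw [intervalIntegral.integral_congr he, integral_id]
    norm_num
  rw [← intervalIntegral.integral_add_adjacent_intervals (ci (-1) 0) (ci 0 1), h0, h1]
  norm_num

/-- For every `g ∈ A₁` one has `|ĝ(α)| ≤ ĝ(0)` for all `α ∈ ℝ`, and consequently
`ρ₁(g) ≥ 0`; moreover, if `g` is not identically zero, then `ρ₁(g) > 0`. -/
theorem statement11 (g : ℝ → ℝ) (hg : memA1 g) :
    (∀ α : ℝ, ‖fourierT g α‖ ≤ (fourierT g 0).re) ∧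
    0 ≤ rho1 g ∧ (g ≠ 0 → 0 < rho1 g) := by
  obtain ⟨hgc, _heven, hpos, hInt, _hneg⟩ := hg
  set G : ℝ := ∫ x, g x with hG
  have hG0 : (fourierT g 0).re = G := by rw [fourierT_zero]; simp [hG]
  have hGnonneg : 0 ≤ G := integral_nonneg hpos
  -- pointwise bound
  have habs : ∀ α : ℝ, ‖fourierT g α‖ ≤ G := by
    intro α
    have h1 : ‖fourierT g α‖ = ‖fourierT g α‖ := rfl
    rw [h1]
    calc ‖fourierT g α‖
        ≤ ∫ x, ‖(g x : ℂ) * Complex.exp (-(2 * Real.pi * α * x : ℝ) * Complex.I)‖ :=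
          norm_integral_le_integral_norm _
      _ = ∫ x, g x := by
          congr 1
          ext x
          rw [norm_mul]
          simp [Complex.norm_exp, abs_of_nonneg (hpos x)]
  have hkey : ∀ α : ℝ, ‖fourierT g α‖ ≤ (fourierT g 0).re := by
    intro α; rw [hG0]; exact habs α
  -- the real part function
  set h : ℝ → ℝ := fun α => (fourierT g α).re with hh
  have hhc : Continuous h := Complex.continuous_re.comp (fourierT_continuous g hInt)
  have hlow : ∀ α : ℝ, -G ≤ h α := by
    intro α
    have := (abs_le.1 ((Complex.abs_re_le_norm (fourierT g α)).trans (habs α))).1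
    simpa [hh] using this
  -- F := (h + G) * |·| is nonnegative
  set F : ℝ → ℝ := fun α => (h α + G) * |α| with hF
  have hFc : Continuous F := ((hhc.add continuous_const).mul continuous_abs)
  have hFnonneg : ∀ α, 0 ≤ F α := fun α =>
    mul_nonneg (by linarith [hlow α]) (abs_nonneg α)
  have hFint : ∀ a b : ℝ, IntervalIntegrable F volume a b :=
    fun a b => hFc.intervalIntegrable a b
  have hhint : ∀ a b : ℝ, IntervalIntegrable (fun α => h α * |α|) volume a b :=
    fun a b => (hhc.mul continuous_abs).intervalIntegrable a b
  have hGaint : ∀ a b : ℝ, IntervalIntegrable (fun α : ℝ => G * |α|) volume a b :=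
    fun a b => (continuous_const.mul continuous_abs).intervalIntegrable a b
  -- rho1 g = ∫_{-1}^1 F
  have hrho : rho1 g = ∫ α in (-1 : ℝ)..1, F α := by
    have hsplit : (∫ α in (-1 : ℝ)..1, F α)
        = (∫ α in (-1 : ℝ)..1, h α * |α|) + ∫ α in (-1 : ℝ)..1, G * |α| := by
      rw [← intervalIntegral.integral_add (hhint (-1) 1) (hGaint (-1) 1)]
      congr 1; ext α; simp [hF]; ring
    have hGa : (∫ α in (-1 : ℝ)..1, G * |α|) = G := by
      rw [intervalIntegral.integral_const_mul, integral_abs_le_one, mul_one]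
    rw [hsplit, hGa, rho1, hG0]
    ring
  have hnn : 0 ≤ rho1 g := by
    rw [hrho]
    exact intervalIntegral.integral_nonneg (by norm_num) (fun x _ => hFnonneg x)
  refine ⟨hkey, hnn, fun hne => ?_⟩
  -- strict positivity
  have hGpos : 0 < G := by
    rw [hG, integral_pos_iff_support_of_nonneg hpos hInt]
    have hopen : IsOpen (Function.support g) := by
      have : Function.support g = g ⁻¹' {0}ᶜ := rfl
      rw [this]
      exact hgc.isOpen_preimage _ isOpen_compl_singleton
    have hne' : (Function.support g).Nonempty := Function.support_nonempty_iff.2 hne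
    exact hopen.measure_pos volume hne'
  have hh0 : h 0 = G := hG0
  -- find a small interval where h > G/2
  have hsopen : IsOpen {α : ℝ | G / 2 < h α} := isOpen_lt continuous_const hhc
  obtain ⟨ε, hε, hball⟩ := Metric.isOpen_iff.1 hsopen 0 (by simp [hh0]; linarith)
  set d : ℝ := min (ε / 2) 1 with hd
  have hdpos : 0 < d := lt_min (by linarith) one_pos
  have hd1 : d ≤ 1 := min_le_right _ _
  have hmem : ∀ α ∈ Set.Ioo (d / 2) d, G / 2 < h α := by
    intro α hα
    apply hball
    rw [Metric.mem_ball, Real.dist_eq, sub_zero]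
    have : |α| = α := abs_of_pos (lt_trans (by linarith [hdpos]) hα.1)
    rw [this]
    calc α < d := hα.2
      _ ≤ ε / 2 := min_le_left _ _
      _ < ε := by linarith
  -- F is positive on Ioo (d/2) d
  have hmid : 0 < ∫ α in (d / 2 : ℝ)..d, F α := by
    apply intervalIntegral.intervalIntegral_pos_of_pos_on (hFint _ _)
    · intro x hx
      have hx0 : 0 < x := lt_trans (by linarith [hdpos]) hx.1
      have := hmem x hx
      apply mul_pos (by linarith) (abs_pos.2 (ne_of_gt hx0))
    · linarith [hdpos]
  have h1 : 0 ≤ ∫ α in (-1 : ℝ)..(d / 2), F α :=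
    intervalIntegral.integral_nonneg (by linarith [hdpos]) (fun x _ => hFnonneg x)
  have h3 : 0 ≤ ∫ α in (d : ℝ)..1, F α :=
    intervalIntegral.integral_nonneg hd1 (fun x _ => hFnonneg x)
  rw [hrho, ← intervalIntegral.integral_add_adjacent_intervals (hFint (-1) d) (hFint d 1),
    ← intervalIntegral.integral_add_adjacent_intervals (hFint (-1) (d / 2)) (hFint (d / 2) d)]
  linarith

end
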